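/- For all nonnegative integers n and ℓ: (n+1)·#{Q in F_n : north(Q) = ℓ} = C(n+1, ℓ+1)·C(2n−ℓ+1, ℓ). -/

import Mathlib

/-- An `F`-step: `(0,1)` or `(a,b)` with `a ≥ 1` and `b ≤ 1`. -/
def IsFStep (s : ℤ × ℤ) : Prop := s = (0, 1) ∨ (1 ≤ s.1 ∧ s.2 ≤ 1)

/-- An `F`-path: a sequence of `F`-steps whose prefix sums satisfy
`a_1 + ⋯ + a_i ≤ b_1 + ⋯ + b_i`. -/
def IsFPath (Q : List (ℤ × ℤ)) : Prop :=
  (∀ s ∈ Q, IsFStep s) ∧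
  ∀ i : ℕ, ((Q.take i).map Prod.fst).sum ≤ ((Q.take i).map Prod.snd).sum

/-- The set of `F`-paths of length `n`. -/
def FPaths (n : ℕ) : Set (List (ℤ × ℤ)) := {Q | Q.length = n ∧ IsFPath Q}

def fheight (Q : List (ℤ × ℤ)) : ℤ := (Q.map Prod.snd).sum - (Q.map Prod.fst).sum

def fnorth (Q : List (ℤ × ℤ)) : ℕ := Q.countP (fun s => decide (s = ((0 : ℤ), (1 : ℤ))))

def faone (Q : List (ℤ × ℤ)) : ℕ := Q.countP (fun s => decide (s.1 = 1))

def fbone (Q : List (ℤ × ℤ)) : ℕ := Q.countP (fun s => decide (s.2 = 1))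

/-- Steps of a Schröder path. -/
inductive SStep : Type
  | u | d | h
deriving DecidableEq

/-- The width of a Schröder step. -/
def swidth : SStep → ℕ
  | .u => 1
  | .d => 1
  | .h => 2

/-- The height-change of a Schröder step. -/
def shc : SStep → ℤ
  | .u => 1
  | .d => -1
  | .h => 0

/-- A Schröder path of semilength `n`. -/
def IsSchroder (n : ℕ) (P : List SStep) : Prop :=
  (P.map swidth).sum = 2 * n ∧ (P.map shc).sum = 0 ∧
  ∀ i : ℕ, 0 ≤ ((P.take i).map shc).sum

/-- Schröder paths of semilength `n` without triple descents. -/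
def SchP (n : ℕ) : Set (List SStep) :=
  {P | IsSchroder n P ∧ ¬ [SStep.d, SStep.d, SStep.d] <:+: P}

/-- Number of `h` letters preceded by a prefix of total height-change `0`. -/
noncomputable def scomp (P : List SStep) : ℕ :=
  Set.ncard {i : ℕ | P[i]? = some SStep.h ∧ ((P.take i).map shc).sum = 0}

/-- Number of `h` letters plus number of double descents. -/
noncomputable def shdd (P : List SStep) : ℕ :=
  P.countP (fun s => decide (s = SStep.h)) +
    Set.ncard {i : ℕ | P[i]? = some SStep.d ∧ P[(i + 1)]? = some SStep.d}

/-- Number of peaks `ud`. -/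
noncomputable def speak (P : List SStep) : ℕ :=
  Set.ncard {i : ℕ | P[i]? = some SStep.u ∧ P[(i + 1)]? = some SStep.d}

/-- Steps of a bicolored Dyck path: up, red down, black down. -/
inductive BStep : Type
  | u | dR | dB
deriving DecidableEq

/-- A restricted bicolored Dyck path of semilength `n`:
`u^{i_1} dR^{j_1} dB^{k_1} ⋯ u^{i_{ℓ-1}} dR^{j_{ℓ-1}} dB^{k_{ℓ-1}} u^{i_ℓ} dR^{j_ℓ}`
with positive `i`'s and `k`'s, `∑ i = n`, `∑ j + ∑ k = n`, and every prefix having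
at least as many `u`'s as down steps. -/
def IsRBD (n : ℕ) (B : List BStep) : Prop :=
  (∃ (blocks : List (ℕ × ℕ × ℕ)) (iL jL : ℕ),
    (∀ t ∈ blocks, 1 ≤ t.1 ∧ 1 ≤ t.2.2) ∧ 1 ≤ iL ∧
    B = (blocks.map (fun t =>
        List.replicate t.1 BStep.u ++ List.replicate t.2.1 BStep.dR ++
          List.replicate t.2.2 BStep.dB)).flatten ++
        (List.replicate iL BStep.u ++ List.replicate jL BStep.dR) ∧
    (blocks.map (fun t => t.1)).sum + iL = n ∧
    (blocks.map (fun t => t.2.1)).sum + jL + (blocks.map (fun t => t.2.2)).sum = n) ∧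
  ∀ i : ℕ, (B.take i).countP (fun s => decide (s ≠ BStep.u)) ≤
    (B.take i).countP (fun s => decide (s = BStep.u))

/-- The length of the final run of red down steps. -/
def blast (B : List BStep) : ℕ := (B.reverse.takeWhile (fun s => decide (s = BStep.dR))).length

/-- The number of double ascents `uu`. -/
noncomputable def bdasc (B : List BStep) : ℕ :=
  Set.ncard {i : ℕ | B[i]? = some BStep.u ∧ B[(i + 1)]? = some BStep.u}

/-- The number of occurrences of `u dB u` or `dR dB u`. -/
noncomputable def bbval (B : List BStep) : ℕ :=
  Set.ncard {i : ℕ | (B[i]? = some BStep.u ∨ B[i]? = some BStep.dR) ∧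
    B[(i + 1)]? = some BStep.dB ∧ B[(i + 2)]? = some BStep.u}

/-- `π : ℕ → ℕ` encodes a permutation of `{1,…,N}`, with value `0` outside
(in particular `π 0 = 0`). -/
def IsPermOn (N : ℕ) (π : ℕ → ℕ) : Prop :=
  Set.BijOn π (Set.Icc 1 N) (Set.Icc 1 N) ∧ ∀ i, i ∉ Set.Icc 1 N → π i = 0

/-- `π` contains the pattern given by the word `σ`. -/
def ContainsPat (N : ℕ) (π : ℕ → ℕ) (σ : List ℕ) : Prop :=
  ∃ f : Fin σ.length → ℕ, StrictMono f ∧ (∀ t, f t ∈ Set.Icc 1 N) ∧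
    ∀ s t : Fin σ.length, π (f s) < π (f t) ↔ σ.get s < σ.get t

/-- Permutations of `{1,…,N}` avoiding the patterns `2341`, `2431` and `3241`. -/
def PermSet (N : ℕ) : Set (ℕ → ℕ) :=
  {π | IsPermOn N π ∧ ¬ContainsPat N π [2, 3, 4, 1] ∧ ¬ContainsPat N π [2, 4, 3, 1] ∧
    ¬ContainsPat N π [3, 2, 4, 1]}

/-- `block(π)`: the number of `j ∈ {1,…,N}` with `{π(1),…,π(j)} = {1,…,j}`. -/
noncomputable def blockStat (N : ℕ) (π : ℕ → ℕ) : ℕ :=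
  Set.ncard {j : ℕ | 1 ≤ j ∧ j ≤ N ∧ π '' Set.Icc 1 j = Set.Icc 1 j}

/-- `asc(π)`: the number of ascents of `π`. -/
noncomputable def ascStat (N : ℕ) (π : ℕ → ℕ) : ℕ :=
  Set.ncard {i : ℕ | 1 ≤ i ∧ i + 1 ≤ N ∧ π i < π (i + 1)}

/-- `crit(π)`: the number of critical entries of `π`. -/
noncomputable def critStat (N : ℕ) (π : ℕ → ℕ) : ℕ :=
  Set.ncard {i : ℕ | 1 ≤ i ∧ i ≤ N ∧ ∀ j k : ℕ, 1 ≤ j → j < i → i < k → k ≤ N →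
    π j < π i → π k < π i → π j < π k}

/-- An inversion sequence: `0 ≤ e_i < i` (1-indexed). -/
def IsInvSeq (e : List ℕ) : Prop := ∀ i : Fin e.length, e.get i < i.val + 1

/-- `e` contains the pattern `101`. -/
def Contains101 (e : List ℕ) : Prop :=
  ∃ i j k : Fin e.length, i < j ∧ j < k ∧ e.get j < e.get i ∧ e.get i = e.get k

/-- `e` contains the pattern `102`. -/
def Contains102 (e : List ℕ) : Prop :=
  ∃ i j k : Fin e.length, i < j ∧ j < k ∧ e.get j < e.get i ∧ e.get i < e.get k

/-- `e` contains the pattern `021`. -/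
def Contains021 (e : List ℕ) : Prop :=
  ∃ i j k : Fin e.length, i < j ∧ j < k ∧ e.get i < e.get k ∧ e.get k < e.get j

/-- Inversion sequences of length `n` avoiding `101` and `102`. -/
def ISet (n : ℕ) : Set (List ℕ) :=
  {e | e.length = n ∧ IsInvSeq e ∧ ¬Contains101 e ∧ ¬Contains102 e}

/-- Inversion sequences of length `n` avoiding `101` and `021`. -/
def JSet (n : ℕ) : Set (List ℕ) :=
  {e | e.length = n ∧ IsInvSeq e ∧ ¬Contains101 e ∧ ¬Contains021 e}

/-- The largest entry of `e` (`0` for the empty sequence). -/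
def maxVal (e : List ℕ) : ℕ := e.foldr max 0

/-- The largest (1-indexed) position of the maximal entry of `e`. -/
def maxid (e : List ℕ) : ℕ := e.length - e.reverse.idxOf (maxVal e)

/-- `e` with the entry at position `maxid e` removed. -/
def ehat (e : List ℕ) : List ℕ := e.eraseIdx (maxid e - 1)

/-- `omi(e)`: the number of `i ∈ {1,…,n}` not occurring as an entry of `e`. -/
noncomputable def omi (e : List ℕ) : ℕ := Set.ncard {i : ℕ | 1 ≤ i ∧ i ≤ e.length ∧ i ∉ e}

/-- `cons(e)`: the number of `i ∈ {1,…,n-1}` such that both `i-1` and `i` occur in `e`. -/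
noncomputable def consStat (e : List ℕ) : ℕ :=
  Set.ncard {i : ℕ | 1 ≤ i ∧ i + 1 ≤ e.length ∧ (i - 1) ∈ e ∧ i ∈ e}

/-- `first(e)`: the length of the initial run of zeros of `e`. -/
def firstStat (e : List ℕ) : ℕ := (e.takeWhile (fun v => decide (v = 0))).length

/-- `single(e)`: the number of positive integers occurring exactly once in `e`. -/
noncomputable def singleStat (e : List ℕ) : ℕ := Set.ncard {v : ℕ | 1 ≤ v ∧ e.count v = 1}

/-- The binomial coefficient `C(p,q)`, interpreted as `0` unless `0 ≤ q ≤ p`. -/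
def C (p q : ℤ) : ℤ := if 0 ≤ q ∧ q ≤ p then (p.toNat.choose q.toNat : ℤ) else 0


def Sset (n l h : ℕ) : Set (List (ℤ×ℤ)) :=
  {Q | Q ∈ FPaths n ∧ fnorth Q = l ∧ fheight Q = (h:ℤ)}

def Fst : ℕ → ℕ → ℕ → Finset (List (ℤ×ℤ))
  | 0, l, h => if l = 0 ∧ h = 0 then {([] : List (ℤ×ℤ))} else ∅
  | n+1, l, h =>
      (if 1 ≤ l ∧ 1 ≤ h then (Fst n (l-1) (h-1)).image (fun Q => Q ++ [((0:ℤ),(1:ℤ))]) else ∅)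
      ∪ (Finset.Icc h n).biUnion (fun h' =>
          ((Fst n l h') ×ˢ Finset.range (h'-h+1)).image
            (fun Qp => Qp.1 ++ [((1 + Qp.2 : ℤ), (1 - ((h'-h) - Qp.2 : ℕ) : ℤ))]))

lemma append_singleton_inj {α : Type*} {X Y : List α} {a b : α} (h : X ++ [a] = Y ++ [b]) :
    X = Y ∧ a = b := by
  have h2 := List.append_inj' h rfl
  exact ⟨h2.1, by simpa using h2.2⟩
-- basic lemmas
lemma fheight_append (Q : List (ℤ×ℤ)) (s : ℤ×ℤ) :
    fheight (Q ++ [s]) = fheight Q + (s.2 - s.1) := by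
  simp [fheight]; ring

lemma fnorth_append (Q : List (ℤ×ℤ)) (s : ℤ×ℤ) :
    fnorth (Q ++ [s]) = fnorth Q + (if s = ((0:ℤ),(1:ℤ)) then 1 else 0) := by
  simp [fnorth, List.countP_append, List.countP_cons]

lemma fheight_le_fnorth (Q : List (ℤ×ℤ)) (h : ∀ s ∈ Q, IsFStep s) :
    fheight Q ≤ (fnorth Q : ℤ) := by
  induction Q with
  | nil => simp [fheight, fnorth]
  | cons s Q ih =>
    have hs := h s (by simp)
    have hQ : ∀ t ∈ Q, IsFStep t := fun t ht => h t (by simp [ht])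
    have := ih hQ
    rcases hs with h1 | h2
    · subst h1
      simp only [fheight, fnorth, List.map_cons, List.sum_cons, List.countP_cons] at *
      push_cast
      simp only [decide_eq_true_eq]
      norm_num
      linarith
    · have hd : s.2 - s.1 ≤ 0 := by linarith [h2.1, h2.2]
      have hcast : (fnorth Q : ℤ) ≤ (fnorth (s :: Q) : ℤ) := by
        have : fnorth Q ≤ fnorth (s :: Q) := by
          simp [fnorth, List.countP_cons]
        exact_mod_cast this
      have hh : fheight (s :: Q) = (s.2 - s.1) + fheight Q := by
        simp [fheight]; ring
      rw [hh]; linarith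

lemma fnorth_le_length (Q : List (ℤ×ℤ)) : fnorth Q ≤ Q.length := List.countP_le_length

lemma fheight_nonneg {Q : List (ℤ×ℤ)} (h : IsFPath Q) : 0 ≤ fheight Q := by
  have := h.2 Q.length
  simp [List.take_length] at this
  simpa [fheight, sub_nonneg] using this

lemma isFPath_append_iff (Q : List (ℤ×ℤ)) (s : ℤ×ℤ) :
    IsFPath (Q ++ [s]) ↔ IsFPath Q ∧ IsFStep s ∧ 0 ≤ fheight (Q ++ [s]) := by
  constructor
  · intro ⟨hsteps, hpre⟩
    refine ⟨⟨fun t ht => hsteps t (by simp [ht]), fun i => ?_⟩, hsteps s (by simp), ?_⟩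
    · rcases le_or_gt i Q.length with hle | hlt
      · have := hpre i
        rwa [List.take_append_of_le_length hle] at this
      · have := hpre Q.length
        rw [List.take_append_of_le_length le_rfl, List.take_length] at this
        rwa [List.take_of_length_le (le_of_lt hlt)]
    · have := hpre (Q.length + 1)
      rw [List.take_of_length_le (by simp)] at this
      simpa [fheight, sub_nonneg] using this
  · rintro ⟨⟨hsteps, hpre⟩, hstep, hh⟩
    refine ⟨?_, fun i => ?_⟩
    · intro t ht
      rcases List.mem_append.1 ht with h | h
      · exact hsteps t h
      · simp at h; subst h; exact hstep
    · rcases le_or_gt i Q.length with hle | hlt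
      · rw [List.take_append_of_le_length hle]; exact hpre i
      · rw [List.take_of_length_le (by simpa using hlt)]
        simpa [fheight, sub_nonneg] using hh

lemma sset_zero (l h : ℕ) : Sset 0 l h = if l = 0 ∧ h = 0 then {([] : List (ℤ×ℤ))} else ∅ := by
  ext Q
  constructor
  · rintro ⟨⟨hlen, hpath⟩, hN, hH⟩
    have : Q = [] := List.length_eq_zero_iff.1 hlen
    subst this
    have hl : l = 0 := by simpa [fnorth] using hN.symm
    have hh : h = 0 := by
      have : ((h:ℤ)) = 0 := by simpa [fheight] using hH.symm
      exact_mod_cast this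
    simp [hl, hh]
  · intro hQ
    by_cases hc : l = 0 ∧ h = 0
    · simp [hc] at hQ
      subst hQ
      refine ⟨⟨rfl, ⟨by simp, fun i => by simp⟩⟩, by simp [fnorth, hc.1], by simp [fheight, hc.2]⟩
    · simp [hc] at hQ


lemma coe_Fst : ∀ n l h, (Fst n l h : Set (List (ℤ×ℤ))) = Sset n l h := by
  intro n
  induction n with
  | zero =>
      intro l h
      rw [sset_zero]
      by_cases hc : l = 0 ∧ h = 0 <;> simp [Fst, hc]
  | succ n ih =>
      intro l h
      ext Q
      simp only [Finset.mem_coe]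
      rw [show Fst (n+1) l h = (if 1 ≤ l ∧ 1 ≤ h then (Fst n (l-1) (h-1)).image (fun Q => Q ++ [((0:ℤ),(1:ℤ))]) else ∅)
      ∪ (Finset.Icc h n).biUnion (fun h' =>
          ((Fst n l h') ×ˢ Finset.range (h'-h+1)).image
            (fun Qp => Qp.1 ++ [((1 + Qp.2 : ℤ), (1 - ((h'-h) - Qp.2 : ℕ) : ℤ))])) from rfl,
        Finset.mem_union]
      constructor
      · -- backward: element of Fst is in Sset
        rintro (hA | hB)
        · -- north-step part
          rcases (by split at hA <;> simp_all : (1 ≤ l ∧ 1 ≤ h) ∧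
              Q ∈ (Fst n (l-1) (h-1)).image (fun Q => Q ++ [((0:ℤ),(1:ℤ))])) with ⟨⟨hl, hh⟩, hmem⟩
          rcases Finset.mem_image.1 hmem with ⟨Q', hQ', rfl⟩
          have hQ's : Q' ∈ Sset n (l-1) (h-1) := by rw [← ih]; exact hQ'
          rcases hQ's with ⟨⟨hlen, hpath⟩, hN, hH⟩
          refine ⟨⟨by simp [hlen], ?_⟩, ?_, ?_⟩
          · rw [isFPath_append_iff]
            refine ⟨hpath, Or.inl rfl, ?_⟩
            rw [fheight_append, hH]
            show (0:ℤ) ≤ ((h-1:ℕ):ℤ) + ((1:ℤ) - (0:ℤ))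
            omega
          · rw [fnorth_append, hN, if_pos rfl]; omega
          · rw [fheight_append, hH]
            show ((h-1:ℕ):ℤ) + ((1:ℤ) - (0:ℤ)) = (h:ℤ)
            omega
        · -- general-step part
          rcases Finset.mem_biUnion.1 hB with ⟨h', hh', hmem⟩
          rcases Finset.mem_Icc.1 hh' with ⟨hhh', hh'n⟩
          rcases Finset.mem_image.1 hmem with ⟨⟨Q', p⟩, hQp, rfl⟩
          rcases Finset.mem_product.1 hQp with ⟨hQ', hp⟩
          have hQ's : Q' ∈ Sset n l h' := by rw [← ih]; exact hQ'
          rcases hQ's with ⟨⟨hlen, hpath⟩, hN, hH⟩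
          have hple : p ≤ h' - h := by simpa using Nat.lt_succ_iff.1 (Finset.mem_range.1 hp)
          have hq : (((h'-h) - p : ℕ) : ℤ) = (h' : ℤ) - h - p := by omega
          refine ⟨⟨by simp [hlen], ?_⟩, ?_, ?_⟩
          · rw [isFPath_append_iff]
            refine ⟨hpath, Or.inr ⟨?_, ?_⟩, ?_⟩
            · show (1:ℤ) ≤ 1 + (p:ℤ)
              omega
            · show (1 - (((h'-h) - p : ℕ) : ℤ)) ≤ 1
              omega
            · rw [fheight_append, hH]
              show (0:ℤ) ≤ (h':ℤ) + ((1 - (((h'-h) - p : ℕ) : ℤ)) - (1 + (p:ℤ)))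
              omega
          · rw [fnorth_append, hN]
            have hne : ¬ (((1 + (p:ℤ), (1 - (((h'-h) - p : ℕ)) : ℤ))) = ((0:ℤ),(1:ℤ))) := by
              intro hcon
              have := congrArg Prod.fst hcon
              simp at this
              omega
            rw [if_neg hne]; omega
          · rw [fheight_append, hH]
            show (h':ℤ) + ((1 - (((h'-h) - p : ℕ) : ℤ)) - (1 + (p:ℤ))) = (h:ℤ)
            omega
      · -- forward: Sset element is in Fst
        rintro ⟨⟨hlen, hpath⟩, hN, hH⟩
        rcases List.eq_nil_or_concat Q with rfl | ⟨Q', s, rfl⟩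
        · simp at hlen
        · rw [List.concat_eq_append] at *
          rw [isFPath_append_iff] at hpath
          rcases hpath with ⟨hQ'path, hstep, _⟩
          have hlen' : Q'.length = n := by simpa using hlen
          have hH0 : (0:ℤ) ≤ fheight Q' := fheight_nonneg hQ'path
          rcases hstep with hs | ⟨ha, hb⟩
          · -- north step
            left
            rw [fnorth_append, hs] at hN
            rw [fheight_append, hs] at hH
            simp at hN hH
            have hl1 : 1 ≤ l := by omega
            have hh1 : 1 ≤ h := by
              by_contra hcon
              have : h = 0 := by omega
              subst this
              simp at hH
              omega
            have hcond : (1 ≤ l ∧ 1 ≤ h) := ⟨hl1, hh1⟩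
            rw [if_pos hcond]
            apply Finset.mem_image.2
            refine ⟨Q', ?_, by rw [hs]⟩
            rw [← Finset.mem_coe, ih]
            refine ⟨⟨hlen', hQ'path⟩, by omega, by omega⟩
          · -- general step
            right
            have hsnot : s ≠ ((0:ℤ),(1:ℤ)) := by
              intro hcon; rw [hcon] at ha; simp at ha
            rw [fnorth_append, if_neg hsnot] at hN
            rw [fheight_append] at hH
            simp at hN
            set H' : ℤ := fheight Q' with hH'def
            have hh'n : H' ≤ (n:ℤ) := by
              calc H' ≤ (fnorth Q' : ℤ) := fheight_le_fnorth Q' hQ'path.1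
                _ ≤ (n : ℤ) := by
                    have := fnorth_le_length Q'
                    rw [hlen'] at this
                    exact_mod_cast this
            set h' : ℕ := H'.toNat with hh'def
            have hH'eq : (h' : ℤ) = H' := Int.toNat_of_nonneg hH0
            have hba : s.2 - s.1 ≤ 0 := by linarith
            have hhh' : h ≤ h' := by
              have : (h:ℤ) ≤ (h':ℤ) := by rw [hH'eq]; omega
              exact_mod_cast this
            have hh'nn : h' ≤ n := by
              have : (h':ℤ) ≤ (n:ℤ) := by rw [hH'eq]; exact hh'n
              exact_mod_cast this
            apply Finset.mem_biUnion.2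
            refine ⟨h', Finset.mem_Icc.2 ⟨hhh', hh'nn⟩, ?_⟩
            apply Finset.mem_image.2
            set p : ℕ := (s.1 - 1).toNat with hpdef
            have hpeq : (p : ℤ) = s.1 - 1 := Int.toNat_of_nonneg (by omega)
            have hwcast : (((h' - h : ℕ)) : ℤ) = (h':ℤ) - h := by
              push_cast [Nat.cast_sub hhh']; ring
            have hple : p ≤ h' - h := by
              have : (p:ℤ) ≤ ((h' - h : ℕ) : ℤ) := by
                rw [hpeq, hwcast, hH'eq]
                omega
              exact_mod_cast this
            refine ⟨⟨Q', p⟩, ?_, ?_⟩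
            · apply Finset.mem_product.2
              refine ⟨?_, Finset.mem_range.2 (by omega)⟩
              rw [← Finset.mem_coe, ih]
              exact ⟨⟨hlen', hQ'path⟩, hN, by rw [hH'eq]⟩
            · have h1 : (1 + (p:ℤ)) = s.1 := by rw [hpeq]; ring
              have h2 : (1 - (((h'-h) - p : ℕ) : ℤ)) = s.2 := by
                have : (((h'-h) - p : ℕ) : ℤ) = ((h'-h : ℕ):ℤ) - p := by
                  push_cast [Nat.cast_sub hple]; ring
                rw [this, hwcast, hpeq, hH'eq]
                omega
              simp only []
              rw [h1, h2]

lemma fheight_of_mem_Fst {n l h : ℕ} {Q : List (ℤ×ℤ)} (hQ : Q ∈ Fst n l h) :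
    fheight Q = (h:ℤ) := by
  have : Q ∈ Sset n l h := by rw [← coe_Fst]; exact hQ
  exact this.2.2

lemma card_Fst_succ (n l h : ℕ) :
    (Fst (n+1) l h).card
      = (if 1 ≤ l ∧ 1 ≤ h then (Fst n (l-1) (h-1)).card else 0)
        + ∑ h' ∈ Finset.Icc h n, (h'-h+1) * (Fst n l h').card := by
  have hrw : Fst (n+1) l h
      = (if 1 ≤ l ∧ 1 ≤ h then (Fst n (l-1) (h-1)).image (fun Q => Q ++ [((0:ℤ),(1:ℤ))]) else ∅)
      ∪ (Finset.Icc h n).biUnion (fun h' =>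
          ((Fst n l h') ×ˢ Finset.range (h'-h+1)).image
            (fun Qp => Qp.1 ++ [((1 + Qp.2 : ℤ), (1 - ((h'-h) - Qp.2 : ℕ) : ℤ))])) := rfl
  rw [hrw]
  rw [Finset.card_union_of_disjoint, Finset.card_biUnion]
  · congr 1
    · split
      · exact Finset.card_image_of_injective _ (fun X Y hXY => (append_singleton_inj hXY).1)
      · simp
    · apply Finset.sum_congr rfl
      intro h' _
      rw [Finset.card_image_of_injective, Finset.card_product, Finset.card_range, mul_comm]
      rintro ⟨X, p⟩ ⟨Y, q⟩ hXY
      obtain ⟨h1, h2⟩ := append_singleton_inj hXY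
      have : p = q := by
        have := congrArg Prod.fst h2
        simp only at this
        have : (p:ℤ) = q := by linarith [this]
        exact_mod_cast this
      have hxy : X = Y := h1
      simp [hxy, this]
  · -- pairwise disjoint biUnion
    intro h1 hh1 h2 hh2 hne
    simp only [Finset.disjoint_left]
    intro Q hQ1 hQ2
    rcases Finset.mem_image.1 hQ1 with ⟨⟨X, p⟩, hXp, hXe⟩
    rcases Finset.mem_image.1 hQ2 with ⟨⟨Y, q⟩, hYq, hYe⟩
    have hXY : X = Y := (append_singleton_inj (hXe.trans hYe.symm)).1
    have e1 : fheight X = (h1:ℤ) := fheight_of_mem_Fst (Finset.mem_product.1 hXp).1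
    have e2 : fheight Y = (h2:ℤ) := fheight_of_mem_Fst (Finset.mem_product.1 hYq).1
    apply hne
    have : (h1:ℤ) = (h2:ℤ) := by rw [← e1, hXY, e2]
    exact_mod_cast this
  · -- disjoint left/right
    simp only [Finset.disjoint_left]
    intro Q hQ1 hQ2
    split at hQ1
    · rcases Finset.mem_image.1 hQ1 with ⟨X, _, hXe⟩
      rcases Finset.mem_biUnion.1 hQ2 with ⟨h', _, hm⟩
      rcases Finset.mem_image.1 hm with ⟨⟨Y, q⟩, _, hYe⟩
      have := (append_singleton_inj (hXe.trans hYe.symm)).2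
      have := congrArg Prod.fst this
      simp only at this
      omega
    · simp at hQ1

lemma Fst_empty_of_lt {n l h : ℕ} (hlh : l < h) : Fst n l h = ∅ := by
  have hset : Sset n l h = ∅ := by
    ext Q
    simp only [Set.mem_empty_iff_false, iff_false]
    rintro ⟨⟨hlen, hpath⟩, hN, hH⟩
    have := fheight_le_fnorth Q hpath.1
    rw [hH, hN] at this
    exact absurd (by exact_mod_cast this) (not_le.2 hlh)
  have := coe_Fst n l h
  rw [hset] at this
  exact_mod_cast Finset.coe_eq_empty.1 this

lemma Fst_empty_of_big {n l h : ℕ} (hnl : n < l) : Fst n l h = ∅ := by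
  have hset : Sset n l h = ∅ := by
    ext Q
    simp only [Set.mem_empty_iff_false, iff_false]
    rintro ⟨⟨hlen, hpath⟩, hN, hH⟩
    have := fnorth_le_length Q
    omega
  have := coe_Fst n l h
  rw [hset] at this
  exact_mod_cast Finset.coe_eq_empty.1 this

-- hockey stick lemmas
lemma HS0 (a : ℕ) : ∀ K : ℕ, ∑ j ∈ Finset.range (K+1), (j+a).choose j = (K+a+1).choose K := by
  intro K
  induction K with
  | zero => simp
  | succ K ih =>
      rw [Finset.sum_range_succ, ih]
      have : (K+1+a+1).choose (K+1) = (K+a+1).choose K + (K+a+1).choose (K+1) := by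
        have := Nat.choose_succ_succ (K+a+1) K
        rw [show K+1+a+1 = K+a+1+1 by ring, this]
      rw [this]
      congr 1
      rw [show K+1+a = K+a+1 by ring]

lemma HS1 (a : ℕ) : ∀ K : ℕ, ∑ j ∈ Finset.range (K+1), (K+1-j) * (j+a).choose j = (K+a+2).choose K := by
  intro K
  induction K with
  | zero => simp
  | succ K ih =>
      have step : ∑ j ∈ Finset.range (K+2), (K+2-j) * (j+a).choose j
          = (∑ j ∈ Finset.range (K+2), (K+1-j) * (j+a).choose j)
            + ∑ j ∈ Finset.range (K+2), (j+a).choose j := by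
        rw [← Finset.sum_add_distrib]
        apply Finset.sum_congr rfl
        intro j hj
        have : j ≤ K + 1 := by simpa [Nat.lt_succ_iff] using hj
        have : K+2-j = (K+1-j) + 1 := by omega
        rw [this, add_mul, one_mul]
      rw [step, Finset.sum_range_succ (f := fun j => (K+1-j) * (j+a).choose j), ih]
      simp only [Nat.sub_self, zero_mul, add_zero]
      rw [HS0 a (K+1)]
      have : (K+1+a+2).choose (K+1) = (K+a+2).choose K + (K+a+2).choose (K+1) := by
        have := Nat.choose_succ_succ (K+a+2) K
        rw [show K+1+a+2 = K+a+2+1 by ring, this]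
      rw [this]
      congr 2
      omega

lemma HS2 (a : ℕ) : ∀ K : ℕ, ∑ j ∈ Finset.range (K+1), (K+1-j) * (K+2-j) * (j+a).choose j
    = 2 * (K+a+3).choose K := by
  intro K
  induction K with
  | zero => simp
  | succ K ih =>
      have step : ∑ j ∈ Finset.range (K+2), (K+2-j) * (K+3-j) * (j+a).choose j
          = (∑ j ∈ Finset.range (K+2), (K+1-j) * (K+2-j) * (j+a).choose j)
            + 2 * ∑ j ∈ Finset.range (K+2), (K+2-j) * (j+a).choose j := by
        rw [Finset.mul_sum, ← Finset.sum_add_distrib]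
        apply Finset.sum_congr rfl
        intro j hj
        have hj' : j ≤ K + 1 := by simpa [Nat.lt_succ_iff] using hj
        have e : (K+2-j) * (K+3-j) = (K+1-j) * (K+2-j) + 2 * (K+2-j) := by
          have h3 : K+3-j = (K+1-j) + 2 := by omega
          rw [h3, Nat.mul_add, Nat.mul_comm (K+2-j) (K+1-j)]
          ring_nf
        calc (K+2-j) * (K+3-j) * (j+a).choose j
            = ((K+1-j) * (K+2-j) + 2 * (K+2-j)) * (j+a).choose j := by rw [e]
          _ = (K+1-j) * (K+2-j) * (j+a).choose j + 2 * ((K+2-j) * (j+a).choose j) := by ring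
      rw [step, Finset.sum_range_succ (f := fun j => (K+1-j) * (K+2-j) * (j+a).choose j), ih]
      simp only [Nat.sub_self, zero_mul, add_zero]
      rw [show K+2 = (K+1)+1 by ring, HS1 a (K+1)]
      have : (K+1+a+3).choose (K+1) = (K+a+3).choose K + (K+a+3).choose (K+1) := by
        have := Nat.choose_succ_succ (K+a+3) K
        rw [show K+1+a+3 = K+a+3+1 by ring, this]
      rw [show K+1+a+2 = K+a+3 by ring, this]
      ring

lemma SL (a h k : ℕ) :
    (∑ j ∈ Finset.range (k+1), (k+1-j) * (h+k+1-j) * (j+a).choose j) + (k+a+2).choose k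
      = 2 * (k+a+3).choose k + h * (k+a+2).choose k := by
  have key : (∑ j ∈ Finset.range (k+1), (k+1-j) * (h+k+1-j) * (j+a).choose j)
      + (∑ j ∈ Finset.range (k+1), (k+1-j) * (j+a).choose j)
      = (∑ j ∈ Finset.range (k+1), (k+1-j) * (k+2-j) * (j+a).choose j)
      + h * (∑ j ∈ Finset.range (k+1), (k+1-j) * (j+a).choose j) := by
    rw [Finset.mul_sum, ← Finset.sum_add_distrib, ← Finset.sum_add_distrib]
    apply Finset.sum_congr rfl
    intro j hj
    have hj' : j ≤ k := by simpa [Nat.lt_succ_iff] using hj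
    have e1 : h+k+1-j = h + (k+1-j) := by omega
    have e2 : k+2-j = (k+1-j) + 1 := by omega
    rw [e1, e2]
    ring
  rw [HS1 a k, HS2 a k] at key
  exact key

def Dd : ℕ → ℕ → ℕ
  | 0, 0 => 1
  | 0, _+1 => 0
  | m+1, k => (k + (2*m+1)).choose k

lemma claimA : ∀ n l h : ℕ, h ≤ l → l ≤ n →
    (n+1) * (Fst n l h).card = (h+1) * (n+1).choose (l+1) * Dd (n-l) (l-h) := by
  intro n
  induction n with
  | zero =>
      intro l h hhl hln
      interval_cases l
      interval_cases h
      simp [Fst, Dd]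
  | succ n ih =>
      intro l h hhl hln
      rcases Nat.lt_or_ge l (n+1) with hlt | hge
      · -- main case : l ≤ n
        have hln' : l ≤ n := by omega
        obtain ⟨k, hk⟩ : ∃ k, l = h + k := ⟨l - h, by omega⟩
        obtain ⟨m, hm⟩ : ∃ m, n = l + m := ⟨n - l, by omega⟩
        -- B1 value
        have hB1 : (n+1) * (if 1 ≤ l ∧ 1 ≤ h then (Fst n (l-1) (h-1)).card else 0)
            = h * (n+1).choose l * Dd (m+1) k := by
          rcases Nat.eq_zero_or_pos h with rfl | hpos
          · simp
          · have hc : 1 ≤ l ∧ 1 ≤ h := ⟨by omega, hpos⟩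
            rw [if_pos hc]
            have := ih (l-1) (h-1) (by omega) (by omega)
            rw [this]
            have e1 : h - 1 + 1 = h := by omega
            have e2 : l - 1 + 1 = l := by omega
            have e3 : n - (l-1) = m + 1 := by omega
            have e4 : (l-1) - (h-1) = k := by omega
            rw [e1, e2, e3, e4]
        -- sum value
        have hSum : (n+1) * (∑ h' ∈ Finset.Icc h n, (h'-h+1) * (Fst n l h').card)
            = (n+1).choose (l+1) *
              (∑ j ∈ Finset.range (k+1), (k+1-j) * (h+k+1-j) * Dd m j) := by
          rw [Finset.mul_sum, Finset.mul_sum]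
          have hstep1 : ∑ h' ∈ Finset.Icc h n, (n+1) * ((h'-h+1) * (Fst n l h').card)
              = ∑ h' ∈ Finset.Icc h l, (n+1) * ((h'-h+1) * (Fst n l h').card) := by
            refine (Finset.sum_subset (Finset.Icc_subset_Icc_right hln') ?_).symm
            intro h' hmem hnot
            have : l < h' := by
              simp only [Finset.mem_Icc] at hmem hnot
              omega
            rw [Fst_empty_of_lt this]
            simp
          rw [hstep1]
          have hstep2 : ∀ h' ∈ Finset.Icc h l, (n+1) * ((h'-h+1) * (Fst n l h').card)
              = (h'-h+1) * ((h'+1) * (n+1).choose (l+1) * Dd m (l-h')) := by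
            intro h' hmem
            simp only [Finset.mem_Icc] at hmem
            rw [show (n+1) * ((h'-h+1) * (Fst n l h').card)
                  = (h'-h+1) * ((n+1) * (Fst n l h').card) by ring,
               ih l h' hmem.2 hln', show n - l = m from by omega]
          rw [Finset.sum_congr rfl hstep2]
          have hIcc : l + 1 - h = k + 1 := by omega
          rw [← Finset.Ico_add_one_right_eq_Icc, Finset.sum_Ico_eq_sum_range,
            show l + 1 - h = k + 1 from hIcc]
          rw [← Finset.sum_range_reflect
            (fun i => (n+1).choose (l+1) * ((k+1-i) * (h+k+1-i) * Dd m i)) (k+1)]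
          apply Finset.sum_congr rfl
          intro i hi
          have hik : i ≤ k := by simpa [Nat.lt_succ_iff] using hi
          have e1 : h + i - h + 1 = i + 1 := by omega
          have e2 : l - (h + i) = k - i := by omega
          have e3 : k + 1 - (k + 1 - 1 - i) = i + 1 := by omega
          have e4 : h + k + 1 - (k + 1 - 1 - i) = h + i + 1 := by omega
          have e5 : k + 1 - 1 - i = k - i := by omega
          rw [e1, e2, e3, e4, e5]
          ring
        -- assemble
        apply Nat.eq_of_mul_eq_mul_left (show 0 < n + 1 by omega)
        rw [show (n+1) * ((n+1+1) * (Fst (n+1) l h).card)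
              = (n+2) * ((n+1) * (Fst (n+1) l h).card) by ring,
            card_Fst_succ, Nat.mul_add, hB1, hSum]
        have hout : n + 1 - l = m + 1 := by omega
        rw [hout, show l - h = k from by omega]
        -- now pure arithmetic
        rcases Nat.eq_zero_or_pos m with rfl | hmpos
        · -- m = 0 : n = l
          have hDd1 : ∀ j : ℕ, Dd (0+1) j = j + 1 := by
            intro j
            show (j + (2*0+1)).choose j = j + 1
            simpa using Nat.choose_succ_self_right j
          have hsum0 : (∑ j ∈ Finset.range (k+1), (k+1-j) * (h+k+1-j) * Dd 0 j)
              = (k+1) * (h+k+1) := by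
            rw [Finset.sum_range_succ']
            have hz : ∀ j ∈ Finset.range k, (k+1-(j+1)) * (h+k+1-(j+1)) * Dd 0 (j+1) = 0 := by
              intro j _
              simp [Dd]
            rw [Finset.sum_congr rfl hz]
            simp [Dd]
          have hnl : n = l := by omega
          subst hnl
          subst hk
          rw [hsum0, hDd1 k]
          rw [Nat.choose_succ_self_right, Nat.choose_self,
            show (h+k+1+1).choose (h+k+1) = h+k+2 from Nat.choose_succ_self_right _]
          ring
        · -- m ≥ 1
          obtain ⟨m', rfl⟩ : ∃ m', m = m' + 1 := ⟨m - 1, by omega⟩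
          have hDm : ∀ j, Dd (m'+1) j = (j + (2*m'+1)).choose j := fun j => rfl
          have hDm2 : Dd (m'+1+1) k = (k + (2*m'+1) + 2).choose k := by
            show (k + (2*(m'+1)+1)).choose k = (k + (2*m'+1) + 2).choose k
            congr 1 <;> omega
          simp only [hDm, hDm2]
          set x := (n+1).choose l with hx
          set y := (n+1).choose (l+1) with hy
          set z := (n+1+1).choose (l+1) with hz
          set A2 := (k + (2*m'+1) + 2).choose k with hA2
          set A3 := (k + (2*m'+1) + 3).choose k with hA3
          set S := ∑ j ∈ Finset.range (k+1), (k+1-j) * (h+k+1-j) * (j+(2*m'+1)).choose j with hS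
          have fact1 : S + A2 = 2 * A3 + h * A2 := by
            rw [hS, hA2, hA3]
            exact SL (2*m'+1) h k
          have fact2 : A2 * (k+(2*m'+1)+3) = A3 * ((2*m'+1)+3) := by
            rw [hA2, hA3]
            have hh := Nat.choose_mul_succ_eq (k+(2*m'+1)+2) k
            rw [show k+(2*m'+1)+2+1 = k+(2*m'+1)+3 by ring] at hh
            rw [hh]
            congr 1 <;> omega
          have fact3 : y * (l+1) = x * (m'+2) := by
            rw [hy, hx]
            rw [Nat.choose_succ_right_eq (n+1) l]
            congr 1 <;> omega
          have fact4 : z = x + y := Nat.choose_succ_succ (n+1) l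
          have F1 : (S:ℤ) + A2 = 2 * A3 + h * A2 := by exact_mod_cast fact1
          have F2 : (A2:ℤ) * ((k:ℤ)+(2*(m':ℤ)+1)+3) = (A3:ℤ) * ((2*(m':ℤ)+1)+3) := by
            exact_mod_cast fact2
          have F3 : (y:ℤ) * ((l:ℤ)+1) = (x:ℤ) * ((m':ℤ)+2) := by exact_mod_cast fact3
          have F4 : (z:ℤ) = (x:ℤ) + y := by exact_mod_cast fact4
          have hlZ : (l:ℤ) = (h:ℤ) + k := by omega
          have hnZ : (n:ℤ) = (h:ℤ) + k + m' + 1 := by omega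
          rw [hlZ] at F3
          zify
          rw [hnZ]
          apply mul_left_cancel₀ (a := ((m':ℤ)+2)) (by positivity)
          linear_combination (-(((h:ℤ)+k+m'+3)*(y:ℤ))) * F2
            + (((k:ℤ)+m'+2)*(A2:ℤ)) * F3
            + (((m':ℤ)+2)*((h:ℤ)+k+m'+3)*(y:ℤ)) * F1
            + (-(((m':ℤ)+2)*((h:ℤ)+k+m'+2)*((h:ℤ)+1)*(A2:ℤ))) * F4
      · -- case l = n+1
        have hl : l = n + 1 := by omega
        subst hl
        have hsum0 : ∑ h' ∈ Finset.Icc h n, (h'-h+1) * (Fst n (n+1) h').card = 0 := by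
          apply Finset.sum_eq_zero
          intro h' _
          rw [Fst_empty_of_big (by omega)]
          simp
        rw [card_Fst_succ, hsum0, add_zero]
        have hD0 : ∀ j, Dd 0 j = if j = 0 then 1 else 0 := by
          intro j
          cases j <;> simp [Dd]
        rcases Nat.eq_zero_or_pos h with rfl | hpos
        · simp [hD0]
        · rw [if_pos ⟨by omega, hpos⟩]
          simp only [Nat.add_sub_cancel, Nat.sub_self]
          have hih := ih n (h-1) (by omega) le_rfl
          rw [Nat.sub_self, Nat.choose_self, hD0] at hih
          rcases Nat.lt_or_ge h (n+1) with hlt2 | hge2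
          · rw [if_neg (show ¬ (n - (h-1) = 0) by omega)] at hih
            simp only [mul_one, mul_zero] at hih
            have hcard : (Fst n n (h-1)).card = 0 := by
              rcases Nat.mul_eq_zero.1 hih with hc | hc
              · omega
              · exact hc
            rw [hcard, hD0, if_neg (show ¬ (n+1-h = 0) by omega)]
            simp
          · have hh : h = n + 1 := by omega
            subst hh
            simp only [Nat.add_sub_cancel] at hih ⊢
            rw [if_pos (show n - n = 0 from Nat.sub_self n), mul_one, mul_one] at hih
            have hcard : (Fst n n n).card = 1 :=
              Nat.eq_of_mul_eq_mul_left (show 0 < n+1 by omega) (by rw [hih, mul_one])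
            rw [hcard, Nat.choose_self, Nat.sub_self, hD0, if_pos rfl]
            ring

lemma finalSum (m l : ℕ) :
    ∑ h ∈ Finset.range (l+1), (h+1) * Dd m (l-h) = (l + 2*m + 1).choose l := by
  rw [← Finset.sum_range_reflect (fun h => (h+1) * Dd m (l-h)) (l+1)]
  have hc : ∀ j ∈ Finset.range (l+1), (l+1-1-j+1) * Dd m (l-(l+1-1-j)) = (l+1-j) * Dd m j := by
    intro j hj
    have hjl : j ≤ l := by simpa [Nat.lt_succ_iff] using hj
    rw [show l+1-1-j = l-j from by omega, show l-(l-j) = j from by omega,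
      show l-j+1 = l+1-j from by omega]
  rw [Finset.sum_congr rfl hc]
  cases m with
  | zero =>
      rw [Finset.sum_range_succ']
      have hz : ∀ j ∈ Finset.range l, (l+1-(j+1)) * Dd 0 (j+1) = 0 := by
        intro j _
        simp [Dd]
      rw [Finset.sum_congr rfl hz]
      simp [Dd, Nat.choose_succ_self_right]
  | succ m'' =>
      have hD : ∀ j, Dd (m''+1) j = (j + (2*m''+1)).choose j := fun j => rfl
      simp only [hD]
      rw [HS1 (2*m''+1) l]
      congr 1 <;> omega

lemma top_set_eq (n l : ℕ) :
    {Q ∈ FPaths n | fnorth Q = l}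
      = ↑((Finset.range (n+1)).biUnion (fun h => Fst n l h)) := by
  ext Q
  simp only [Set.mem_setOf_eq, Finset.coe_biUnion, Set.mem_iUnion, Finset.mem_coe,
    Finset.mem_range]
  constructor
  · rintro ⟨⟨hlen, hpath⟩, hN⟩
    refine ⟨(fheight Q).toNat, ?_, ?_⟩
    · have h1 : fheight Q ≤ (fnorth Q : ℤ) := fheight_le_fnorth Q hpath.1
      have h2 : fnorth Q ≤ n := hlen ▸ fnorth_le_length Q
      omega
    · rw [← Finset.mem_coe, coe_Fst]
      exact ⟨⟨hlen, hpath⟩, hN, (Int.toNat_of_nonneg (fheight_nonneg hpath)).symm⟩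
  · rintro ⟨h, _, hmem⟩
    rw [← Finset.mem_coe, coe_Fst] at hmem
    exact ⟨hmem.1, hmem.2.1⟩

lemma top_card (n l : ℕ) :
    ({Q ∈ FPaths n | fnorth Q = l}).ncard
      = ∑ h ∈ Finset.range (n+1), (Fst n l h).card := by
  rw [top_set_eq, Set.ncard_coe_finset]
  apply Finset.card_biUnion
  intro h1 _ h2 _ hne
  simp only [Finset.disjoint_left]
  intro Q hQ1 hQ2
  have e1 := fheight_of_mem_Fst hQ1
  have e2 := fheight_of_mem_Fst hQ2
  apply hne
  have : (h1:ℤ) = (h2:ℤ) := by rw [← e1, e2]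
  exact_mod_cast this

lemma main_nat (n l : ℕ) (hln : l ≤ n) :
    (n+1) * ({Q ∈ FPaths n | fnorth Q = l}).ncard
      = (n+1).choose (l+1) * (2*n-l+1).choose l := by
  rw [top_card, Finset.mul_sum]
  have hz : ∀ h ∈ Finset.range (n+1), h ∉ Finset.range (l+1) →
      (n+1) * (Fst n l h).card = 0 := by
    intro h _ hnot
    rw [Fst_empty_of_lt (by simp at hnot; omega)]
    simp
  rw [← Finset.sum_subset (Finset.range_subset_range.2 (by omega)) hz]
  have hc : ∀ h ∈ Finset.range (l+1), (n+1) * (Fst n l h).card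
      = (n+1).choose (l+1) * ((h+1) * Dd (n-l) (l-h)) := by
    intro h hh
    rw [claimA n l h (by simp at hh; omega) hln]
    ring
  rw [Finset.sum_congr rfl hc, ← Finset.mul_sum, finalSum]
  congr 2
  omega


/-- Corollary 6.3: `a_n(∗, l, ∗)`. -/
theorem fpath_north_count (n l : ℕ) :
    ((n : ℤ) + 1) * (({Q ∈ FPaths n | fnorth Q = l}).ncard : ℤ) =
    C ((n : ℤ) + 1) ((l : ℤ) + 1) * C (2 * (n : ℤ) - l + 1) (l : ℤ) := by
  rcases Nat.lt_or_ge n l with hnl | hln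
  · have hempty : {Q ∈ FPaths n | fnorth Q = l} = ∅ := by
      ext Q
      simp only [Set.mem_setOf_eq, Set.mem_empty_iff_false, iff_false]
      rintro ⟨⟨hlen, hpath⟩, hN⟩
      have := fnorth_le_length Q
      omega
    rw [hempty]
    have hC : C ((n:ℤ)+1) ((l:ℤ)+1) = 0 := by
      rw [C, if_neg (by omega)]
    rw [hC]
    simp
  · have e1 : C ((n:ℤ)+1) ((l:ℤ)+1) = ((n+1).choose (l+1) : ℤ) := by
      rw [C, if_pos (by omega)]
      rw [show ((n:ℤ)+1).toNat = n+1 from by omega, show ((l:ℤ)+1).toNat = l+1 from by omega]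
    have e2 : C (2*(n:ℤ) - l + 1) (l:ℤ) = ((2*n-l+1).choose l : ℤ) := by
      rw [C, if_pos (by omega)]
      rw [show (2*(n:ℤ)-(l:ℤ)+1).toNat = 2*n-l+1 from by omega,
        show ((l:ℤ)).toNat = l from by omega]
    rw [e1, e2]
    exact_mod_cast main_nat n l hln
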